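/- Let Y ⊆ ℝ^{md} be a closed convex set with 0 ∈ Y and let z = (𝐱,𝐲) ∈ X^m × ℝ^{md}. If g_Y(𝐋𝐱, z) ≤ ε < ∞ and ‖𝐋𝐱‖₂ ≤ δ, then 𝐱 is an (ε,δ)-solution of the problem min{F(𝐱) : 𝐱 ∈ X^m, 𝐋𝐱 = 0}. Moreover, in the case Y = ℝ^{md}, for any v ∈ ℝ^{md} such that g(v,z) ≤ ε < ∞ and ‖v‖₂ ≤ δ, one necessarily has v = 𝐋𝐱. -/
import Mathlib


/-!
Common definitions for formalizing "Communication-Efficient Algorithms for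
Decentralized and Stochastic Optimization" (Lan, Lee, Zhou).

Vectors in ℝ^d are modeled as `Fin d → ℝ`, and block vectors in ℝ^{md}
(consisting of m blocks of dimension d) as `Fin m → Fin d → ℝ`.
-/

noncomputable section

namespace DCSPaper

open Finset MeasureTheory

/-- Euclidean inner product on ℝ^d. -/
def ipd {d : ℕ} (u v : Fin d → ℝ) : ℝ := ∑ a, u a * v a

/-- Euclidean norm on ℝ^d. -/
def nrmd {d : ℕ} (u : Fin d → ℝ) : ℝ := Real.sqrt (ipd u u)

/-- Euclidean inner product on ℝ^{md}, in block form. -/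
def ipP {m d : ℕ} (x y : Fin m → Fin d → ℝ) : ℝ := ∑ i, ipd (x i) (y i)

/-- Euclidean norm on ℝ^{md}. -/
def nrmP {m d : ℕ} (x : Fin m → Fin d → ℝ) : ℝ := Real.sqrt (ipP x x)

/-- Action of the Kronecker product 𝐋 = L ⊗ I_d on a block vector. -/
def Lmul {m d : ℕ} (L : Matrix (Fin m) (Fin m) ℝ) (x : Fin m → Fin d → ℝ) :
    Fin m → Fin d → ℝ := fun i a => ∑ j, L i j * x j a

/-- The norm on X^m built from the block norms `nX i`:  ‖𝐱‖² = Σ_i ‖x_i‖_{X_i}². -/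
def nrmX {m d : ℕ} (nX : Fin m → (Fin d → ℝ) → ℝ) (x : Fin m → Fin d → ℝ) : ℝ :=
  Real.sqrt (∑ i, (nX i (x i)) ^ 2)

/-- Dual norm of a norm `n` on ℝ^d:  ‖g‖_* = sup {⟨g,u⟩ : ‖u‖ ≤ 1}. -/
def dnrm {d : ℕ} (n : (Fin d → ℝ) → ℝ) (g : Fin d → ℝ) : ℝ :=
  sSup {r | ∃ u, n u ≤ 1 ∧ r = ipd g u}

/-- `n` is a norm on ℝ^d. -/
structure IsNorm {d : ℕ} (n : (Fin d → ℝ) → ℝ) : Prop where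
  nonneg : ∀ u, 0 ≤ n u
  eq_zero_iff : ∀ u, n u = 0 ↔ u = 0
  smul : ∀ (c : ℝ) (u), n (c • u) = |c| * n u
  triangle : ∀ u v, n (u + v) ≤ n u + n v

/-- Bregman distance (prox-function) V(x,u) associated with ω and its gradient map gω. -/
def Breg {d : ℕ} (om : (Fin d → ℝ) → ℝ) (gom : (Fin d → ℝ) → (Fin d → ℝ))
    (x u : Fin d → ℝ) : ℝ := om u - om x - ipd (gom x) (u - x)

/-- 𝐕(𝐱,𝐮) = Σ_i V_i(x_i,u_i). -/
def BregP {m d : ℕ} (om : Fin m → (Fin d → ℝ) → ℝ)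
    (gom : Fin m → (Fin d → ℝ) → (Fin d → ℝ)) (x u : Fin m → Fin d → ℝ) : ℝ :=
  ∑ i, Breg (om i) (gom i) (x i) (u i)

/-- F(𝐱) = Σ_i f_i(x_i). -/
def FF {m d : ℕ} (f : Fin m → (Fin d → ℝ) → ℝ) (x : Fin m → Fin d → ℝ) : ℝ :=
  ∑ i, f i (x i)

/-- The primal-dual gap function Q(z; z̄) with z = (x,y), z̄ = (xb,yb). -/
def Qgap {m d : ℕ} (L : Matrix (Fin m) (Fin m) ℝ) (f : Fin m → (Fin d → ℝ) → ℝ)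
    (x y xb yb : Fin m → Fin d → ℝ) : ℝ :=
  FF f x + ipP (Lmul L x) yb - FF f xb - ipP (Lmul L xb) y

/-- `g` is a subgradient of `f` at `y`, relative to the set `S`. -/
def IsSubgrad {d : ℕ} (f : (Fin d → ℝ) → ℝ) (S : Set (Fin d → ℝ))
    (y g : Fin d → ℝ) : Prop := ∀ x ∈ S, f y + ipd g (x - y) ≤ f x

/-- `f` satisfies (μ/2)‖x-y‖² ≤ f(x) - f(y) - ⟨f'(y),x-y⟩ ≤ M‖x-y‖ on X, w.r.t. norm `n`. -/
def SubgradCond {d : ℕ} (n : (Fin d → ℝ) → ℝ) (X : Set (Fin d → ℝ))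
    (f : (Fin d → ℝ) → ℝ) (μ M : ℝ) : Prop :=
  ∀ y ∈ X, ∀ g, IsSubgrad f X y g → ∀ x ∈ X,
    μ / 2 * (n (x - y)) ^ 2 ≤ f x - f y - ipd g (x - y) ∧
    f x - f y - ipd g (x - y) ≤ M * n (x - y)

/-- `om` is a distance generating function with modulus 1 on X w.r.t. norm `n`,
with (sub)gradient map `gom`: it is convex (with `gom` a gradient/subgradient
selection) and strongly convex with modulus 1 w.r.t. `n`. -/
def IsDGF {d : ℕ} (n : (Fin d → ℝ) → ℝ) (X : Set (Fin d → ℝ))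
    (om : (Fin d → ℝ) → ℝ) (gom : (Fin d → ℝ) → (Fin d → ℝ)) : Prop :=
  (∀ x ∈ X, ∀ u ∈ X, om x + ipd (gom x) (u - x) ≤ om u) ∧
  (∀ x ∈ X, ∀ u ∈ X, (n (x - u)) ^ 2 ≤ ipd (gom x - gom u) (x - u))

/-- (𝐱*,𝐲*) is a saddle point of min_{𝐱∈X^m} max_{𝐲∈ℝ^{md}} F(𝐱) + ⟨𝐋𝐱,𝐲⟩. -/
def IsSaddle {m d : ℕ} (L : Matrix (Fin m) (Fin m) ℝ)
    (f : Fin m → (Fin d → ℝ) → ℝ) (X : Fin m → Set (Fin d → ℝ))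
    (xs ys : Fin m → Fin d → ℝ) : Prop :=
  (∀ i, xs i ∈ X i) ∧
  (∀ y, FF f xs + ipP (Lmul L xs) y ≤ FF f xs + ipP (Lmul L xs) ys) ∧
  (∀ x, (∀ i, x i ∈ X i) → FF f xs + ipP (Lmul L xs) ys ≤ FF f x + ipP (Lmul L x) ys)

/-- 𝐱* is an optimal solution of min{F(𝐱) : 𝐱 ∈ X^m, 𝐋𝐱 = 0}. -/
def IsOptimal {m d : ℕ} (L : Matrix (Fin m) (Fin m) ℝ)
    (f : Fin m → (Fin d → ℝ) → ℝ) (X : Fin m → Set (Fin d → ℝ))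
    (xs : Fin m → Fin d → ℝ) : Prop :=
  (∀ i, xs i ∈ X i) ∧ Lmul L xs = 0 ∧
  ∀ x, (∀ i, x i ∈ X i) → Lmul L x = 0 → FF f xs ≤ FF f x

end DCSPaper

namespace DCSPaper
open Finset

/-- Proposition 1 / perturbed gap function and approximate solutions.
If `g_Y(𝐋𝐱, z) ≤ ε` (i.e. `Q(z; 𝐱*, ȳ) − ⟨𝐋𝐱, ȳ⟩ ≤ ε` for all `ȳ ∈ Y`) and `‖𝐋𝐱‖ ≤ δ`,
then `𝐱` is an `(ε,δ)`-solution; and in the case `Y = ℝ^{md}`, any `v` with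
`g(v,z) ≤ ε < ∞` and `‖v‖ ≤ δ` satisfies `v = 𝐋𝐱`. -/
theorem perturbed_gap_gives_approx_solution
    {m d : ℕ} (G : SimpleGraph (Fin m)) [DecidableRel G.Adj] (hG : G.Connected)
    (L : Matrix (Fin m) (Fin m) ℝ) (hL : L = G.lapMatrix ℝ)
    (X : Fin m → Set (Fin d → ℝ))
    (hXconv : ∀ i, Convex ℝ (X i)) (hXcl : ∀ i, IsClosed (X i))
    (hXne : (⋂ i, X i).Nonempty)
    (f : Fin m → (Fin d → ℝ) → ℝ) (hfconv : ∀ i, ConvexOn ℝ (X i) (f i))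
    (xs : Fin m → Fin d → ℝ) (hopt : IsOptimal L f X xs)
    (Y : Set (Fin m → Fin d → ℝ)) (hYcl : IsClosed Y) (hYconv : Convex ℝ Y)
    (hY0 : (0 : Fin m → Fin d → ℝ) ∈ Y)
    (xx yy : Fin m → Fin d → ℝ) (hxx : ∀ i, xx i ∈ X i)
    (ε δ : ℝ) :
    ((∀ yb ∈ Y, Qgap L f xx yy xs yb - ipP (Lmul L xx) yb ≤ ε) →
      nrmP (Lmul L xx) ≤ δ →
      (FF f xx - FF f xs ≤ ε ∧ nrmP (Lmul L xx) ≤ δ)) ∧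
    (∀ v : Fin m → Fin d → ℝ,
      (∀ yb : Fin m → Fin d → ℝ, Qgap L f xx yy xs yb - ipP v yb ≤ ε) →
      nrmP v ≤ δ → v = Lmul L xx) := by
  have ipP_zero_right : ∀ (x : Fin m → Fin d → ℝ), ipP x 0 = 0 := by
    intro x
    simp [ipP, ipd]
  have ipP_zero_left : ∀ (x : Fin m → Fin d → ℝ), ipP 0 x = 0 := by
    intro x
    simp [ipP, ipd]
  have hLxs : Lmul L xs = 0 := hopt.2.1
  have hQ0 : Qgap L f xx yy xs 0 = FF f xx - FF f xs := by
    simp [Qgap, hLxs, ipP_zero_right, ipP_zero_left]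
  constructor
  · intro hgap hnrm
    refine ⟨?_, hnrm⟩
    have := hgap 0 hY0
    rw [hQ0, ipP_zero_right] at this
    linarith
  · intro v hgap _
    -- Qgap L f xx yy xs yb = FF f xx + ipP (Lmul L xx) yb - FF f xs
    have hQ : ∀ yb, Qgap L f xx yy xs yb
        = FF f xx - FF f xs + ipP (Lmul L xx) yb := by
      intro yb
      simp [Qgap, hLxs, ipP_zero_left]
      ring
    set w : Fin m → Fin d → ℝ := fun i a => Lmul L xx i a - v i a with hw
    have key : ∀ t : ℝ, (FF f xx - FF f xs) + t * ipP w w ≤ ε := by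
      intro t
      have := hgap (t • w)
      rw [hQ] at this
      have h1 : ipP (Lmul L xx) (t • w) - ipP v (t • w) = t * ipP w w := by
        simp only [ipP, ipd, hw, Pi.smul_apply, smul_eq_mul]
        rw [← Finset.sum_sub_distrib, Finset.mul_sum]
        refine Finset.sum_congr rfl fun i _ => ?_
        rw [← Finset.sum_sub_distrib, Finset.mul_sum]
        refine Finset.sum_congr rfl fun a _ => ?_
        ring
      linarith
    have hww : ipP w w = 0 := by
      by_contra h
      have hpos : 0 < ipP w w := by
        rcases lt_or_gt_of_ne h with h' | h'
        · exfalso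
          have hnn : 0 ≤ ipP w w := by
            apply Finset.sum_nonneg
            intro i _
            apply Finset.sum_nonneg
            intro a _
            exact mul_self_nonneg _
          linarith
        · exact h'
      have := key ((ε - (FF f xx - FF f xs) + 1) / ipP w w)
      rw [div_mul_cancel₀ _ (ne_of_gt hpos)] at this
      linarith
    have hwz : ∀ i a, w i a = 0 := by
      intro i a
      have hall := (Finset.sum_eq_zero_iff_of_nonneg (fun i _ =>
        Finset.sum_nonneg fun a _ => mul_self_nonneg (w i a))).mp hww i (Finset.mem_univ i)
      have := (Finset.sum_eq_zero_iff_of_nonneg (fun a _ =>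
        mul_self_nonneg (w i a))).mp hall a (Finset.mem_univ a)
      exact mul_self_eq_zero.mp this
    funext i a
    have := hwz i a
    simp only [hw] at this
    linarith


end DCSPaper
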